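/- If W₂(η, η̂) ≤ ε for probability measures η, η̂ on ℝ with finite second moments, then the standard deviations satisfy |σ_η − σ_{η̂}| ≤ (1/2)(√2 + √6)·ε. -/

import Mathlib

open MeasureTheory ProbabilityTheory Real

/-- The `p`-Wasserstein distance: infimum over couplings of
`(∫ ‖θ - θ̂‖^p dγ)^(1/p)`. -/
noncomputable def wassersteinDist {E : Type*} [NormedAddCommGroup E] [MeasurableSpace E]
    (p : ℝ) (μ ν : Measure E) : ℝ :=
  sInf {w | ∃ γ : Measure (E × E), γ.map Prod.fst = μ ∧ γ.map Prod.snd = ν ∧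
    w = (∫ q, ‖q.1 - q.2‖ ^ p ∂γ) ^ (1 / p)}

/-- Mean of a measure on `ℝ`. -/
noncomputable def mMean (μ : Measure ℝ) : ℝ := ∫ x, x ∂μ

/-- Variance of a measure on `ℝ`. -/
noncomputable def mVar (μ : Measure ℝ) : ℝ := ∫ x, (x - mMean μ) ^ 2 ∂μ

/-- Standard deviation of a measure on `ℝ`. -/
noncomputable def mStd (μ : Measure ℝ) : ℝ := Real.sqrt (mVar μ)

variable {α : Type*} [MeasurableSpace α]

lemma cs_int (μ : Measure α) (f g : α → ℝ) (hf : MemLp f 2 μ) (hg : MemLp g 2 μ) :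
    ∫ a, f a * g a ∂μ ≤ Real.sqrt (∫ a, f a ^ 2 ∂μ) * Real.sqrt (∫ a, g a ^ 2 ∂μ) := by
  have hfg : Integrable (fun a => f a * g a) μ := by
    refine Integrable.mono' ((hf.integrable_sq.add hg.integrable_sq).div_const 2)
      (hf.1.mul hg.1) (Filter.Eventually.of_forall fun x => ?_)
    have := sq_nonneg (|f x| - |g x|)
    have h2 : |f x * g x| = |f x| * |g x| := abs_mul _ _
    simp only [Real.norm_eq_abs, Pi.add_apply, Pi.div_apply]
    rw [h2]
    nlinarith [sq_abs (f x), sq_abs (g x)]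
  have hpq : (2:ℝ).HolderConjugate 2 := Real.HolderConjugate.two_two
  have hf2 : MemLp f (ENNReal.ofReal 2) μ := by
    convert hf using 2; simp [ENNReal.ofReal_ofNat]
  have hg2 : MemLp g (ENNReal.ofReal 2) μ := by
    convert hg using 2; simp [ENNReal.ofReal_ofNat]
  have key := integral_mul_norm_le_Lp_mul_Lq hpq hf2 hg2
  have h1 : ∫ a, f a * g a ∂μ ≤ ∫ a, ‖f a‖ * ‖g a‖ ∂μ := by
    refine integral_mono hfg (by simp only [Real.norm_eq_abs, ← abs_mul]; exact hfg.abs) fun x => ?_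
    simp only [Real.norm_eq_abs, ← abs_mul]
    exact le_abs_self _
  have h2 : ∀ h : α → ℝ, (∫ a, ‖h a‖ ^ (2:ℝ) ∂μ) ^ ((1:ℝ)/2) = Real.sqrt (∫ a, h a ^ 2 ∂μ) := by
    intro h
    rw [Real.sqrt_eq_rpow]
    congr 1
    refine integral_congr_ae (Filter.Eventually.of_forall fun x => ?_)
    show ‖h x‖ ^ (2:ℝ) = h x ^ 2
    rw [show ((2:ℝ)) = ((2:ℕ):ℝ) by norm_num, Real.rpow_natCast]
    simp [sq_abs]
  calc ∫ a, f a * g a ∂μ ≤ ∫ a, ‖f a‖ * ‖g a‖ ∂μ := h1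
    _ ≤ (∫ a, ‖f a‖ ^ (2:ℝ) ∂μ) ^ ((1:ℝ)/2) * (∫ a, ‖g a‖ ^ (2:ℝ) ∂μ) ^ ((1:ℝ)/2) := key
    _ = _ := by rw [h2 f, h2 g]

lemma key_coupling (γ : Measure (ℝ × ℝ)) [IsProbabilityMeasure γ]
    (hμ2 : Integrable (fun x => x ^ 2) (γ.map Prod.fst))
    (hν2 : Integrable (fun x => x ^ 2) (γ.map Prod.snd)) :
    (mStd (γ.map Prod.fst) - mStd (γ.map Prod.snd)) ^ 2 ≤ ∫ q, (q.1 - q.2) ^ 2 ∂γ := by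
  set a := mMean (γ.map Prod.fst) with ha_def
  set b := mMean (γ.map Prod.snd) with hb_def
  have hX2 : Integrable (fun q : ℝ × ℝ => q.1 ^ 2) γ :=
    (integrable_map_measure hμ2.aestronglyMeasurable measurable_fst.aemeasurable).mp hμ2
  have hY2 : Integrable (fun q : ℝ × ℝ => q.2 ^ 2) γ :=
    (integrable_map_measure hν2.aestronglyMeasurable measurable_snd.aemeasurable).mp hν2
  have hX : MemLp (fun q : ℝ × ℝ => q.1) 2 γ :=
    (memLp_two_iff_integrable_sq measurable_fst.aestronglyMeasurable).mpr hX2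
  have hY : MemLp (fun q : ℝ × ℝ => q.2) 2 γ :=
    (memLp_two_iff_integrable_sq measurable_snd.aestronglyMeasurable).mpr hY2
  have hXc : MemLp (fun q : ℝ × ℝ => q.1 - a) 2 γ := hX.sub (memLp_const a)
  have hYc : MemLp (fun q : ℝ × ℝ => q.2 - b) 2 γ := hY.sub (memLp_const b)
  have hXi : Integrable (fun q : ℝ × ℝ => q.1) γ := hX.integrable (by norm_num)
  have hYi : Integrable (fun q : ℝ × ℝ => q.2) γ := hY.integrable (by norm_num)
  have ha : a = ∫ q, q.1 ∂γ := by
    rw [ha_def, mMean]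
    exact integral_map measurable_fst.aemeasurable aestronglyMeasurable_id
  have hb : b = ∫ q, q.2 ∂γ := by
    rw [hb_def, mMean]
    exact integral_map measurable_snd.aemeasurable aestronglyMeasurable_id
  have hga : AEStronglyMeasurable (fun x : ℝ => (x - a) ^ 2) (γ.map Prod.fst) :=
    ((continuous_id.sub continuous_const).pow 2).aestronglyMeasurable
  have hgb : AEStronglyMeasurable (fun x : ℝ => (x - b) ^ 2) (γ.map Prod.snd) :=
    ((continuous_id.sub continuous_const).pow 2).aestronglyMeasurable
  have hVa : mVar (γ.map Prod.fst) = ∫ q, (q.1 - a) ^ 2 ∂γ := by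
    rw [mVar]
    exact integral_map measurable_fst.aemeasurable hga
  have hVb : mVar (γ.map Prod.snd) = ∫ q, (q.2 - b) ^ 2 ∂γ := by
    rw [mVar]
    exact integral_map measurable_snd.aemeasurable hgb
  have hVa0 : 0 ≤ mVar (γ.map Prod.fst) := by
    rw [hVa]; exact integral_nonneg fun q => sq_nonneg _
  have hVb0 : 0 ≤ mVar (γ.map Prod.snd) := by
    rw [hVb]; exact integral_nonneg fun q => sq_nonneg _
  have hSa : mStd (γ.map Prod.fst) ^ 2 = mVar (γ.map Prod.fst) := Real.sq_sqrt hVa0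
  have hSb : mStd (γ.map Prod.snd) ^ 2 = mVar (γ.map Prod.snd) := Real.sq_sqrt hVb0
  -- Cauchy–Schwarz
  have hCS : ∫ q, (q.1 - a) * (q.2 - b) ∂γ ≤ mStd (γ.map Prod.fst) * mStd (γ.map Prod.snd) := by
    have := cs_int γ _ _ hXc hYc
    rwa [← hVa, ← hVb, ← mStd, ← mStd] at this
  -- integrabilities
  have I1 : Integrable (fun q : ℝ × ℝ => (q.1 - a) ^ 2) γ := hXc.integrable_sq
  have I2 : Integrable (fun q : ℝ × ℝ => (q.2 - b) ^ 2) γ := hYc.integrable_sq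
  have Iprod : Integrable (fun q : ℝ × ℝ => (q.1 - a) * (q.2 - b)) γ := by
    refine Integrable.mono' ((I1.add I2).div_const 2) (hXc.1.mul hYc.1)
      (Filter.Eventually.of_forall fun q => ?_)
    simp only [Real.norm_eq_abs, Pi.add_apply, Pi.div_apply]
    rw [abs_mul]
    nlinarith [sq_nonneg (|q.1 - a| - |q.2 - b|), sq_abs (q.1 - a), sq_abs (q.2 - b),
      abs_nonneg (q.1 - a), abs_nonneg (q.2 - b)]
  have IXY : Integrable (fun q : ℝ × ℝ => q.1 - q.2) γ := hXi.sub hYi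
  have IXY2 : Integrable (fun q : ℝ × ℝ => (q.1 - q.2) ^ 2) γ := (hX.sub hY).integrable_sq
  have hmean : ∫ q, (q.1 - q.2) ∂γ = a - b := by
    rw [integral_sub hXi hYi, ha, hb]
  -- expansion A
  have eA : ∫ q, ((q.1 - a) - (q.2 - b)) ^ 2 ∂γ
      = mVar (γ.map Prod.fst) + mVar (γ.map Prod.snd)
        - 2 * ∫ q, (q.1 - a) * (q.2 - b) ∂γ := by
    have : (fun q : ℝ × ℝ => ((q.1 - a) - (q.2 - b)) ^ 2)
        = fun q => ((q.1 - a) ^ 2 + (q.2 - b) ^ 2) - 2 * ((q.1 - a) * (q.2 - b)) := by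
      funext q; ring
    have I12 : Integrable (fun q : ℝ × ℝ => (q.1 - a) ^ 2 + (q.2 - b) ^ 2) γ := I1.add I2
    have IC : Integrable (fun q : ℝ × ℝ => 2 * ((q.1 - a) * (q.2 - b))) γ := Iprod.const_mul 2
    rw [this, integral_sub I12 IC, integral_add I1 I2, integral_const_mul _ _, hVa, hVb]
  -- expansion B
  have eB : ∫ q, ((q.1 - a) - (q.2 - b)) ^ 2 ∂γ
      = (∫ q, (q.1 - q.2) ^ 2 ∂γ) - (a - b) ^ 2 := by
    have : (fun q : ℝ × ℝ => ((q.1 - a) - (q.2 - b)) ^ 2)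
        = fun q => ((q.1 - q.2) ^ 2 - (2 * (a - b)) * (q.1 - q.2)) + (a - b) ^ 2 := by
      funext q; ring
    have Ilin : Integrable (fun q : ℝ × ℝ => 2 * (a - b) * (q.1 - q.2)) γ := IXY.const_mul _
    have Isub : Integrable (fun q : ℝ × ℝ => (q.1 - q.2) ^ 2 - 2 * (a - b) * (q.1 - q.2)) γ :=
      IXY2.sub Ilin
    rw [this, integral_add Isub (integrable_const _), integral_sub IXY2 Ilin,
      integral_const_mul _ _, hmean, integral_const]
    simp [measure_univ]
    ring
  nlinarith [hCS, eA, eB, sq_nonneg (a - b), hSa, hSb,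
    Real.sqrt_nonneg (mVar (γ.map Prod.fst)), Real.sqrt_nonneg (mVar (γ.map Prod.snd))]

theorem stmt6 (μ ν : Measure ℝ) [IsProbabilityMeasure μ] [IsProbabilityMeasure ν]
    (hμ : Integrable (fun x => x ^ 2) μ) (hν : Integrable (fun x => x ^ 2) ν)
    (ε : ℝ) (h : wassersteinDist 2 μ ν ≤ ε) :
    |mStd μ - mStd ν| ≤ (1 / 2) * (Real.sqrt 2 + Real.sqrt 6) * ε := by
  have hs2 : (1:ℝ) ≤ Real.sqrt 2 := by
    nlinarith [Real.sq_sqrt (show (0:ℝ) ≤ 2 by norm_num), Real.sqrt_nonneg 2]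
  have hs6 : (1:ℝ) ≤ Real.sqrt 6 := by
    nlinarith [Real.sq_sqrt (show (0:ℝ) ≤ 6 by norm_num), Real.sqrt_nonneg 6]
  have hc1 : (1:ℝ) ≤ (1 / 2) * (Real.sqrt 2 + Real.sqrt 6) := by linarith
  -- the coupling set is nonempty
  have hne : {w | ∃ γ : Measure (ℝ × ℝ), γ.map Prod.fst = μ ∧ γ.map Prod.snd = ν ∧
      w = (∫ q, ‖q.1 - q.2‖ ^ (2:ℝ) ∂γ) ^ ((1:ℝ) / 2)}.Nonempty := by
    refine ⟨_, μ.prod ν, ?_, ?_, rfl⟩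
    · simp [Measure.map_fst_prod, measure_univ]
    · simp [Measure.map_snd_prod, measure_univ]
  -- every element is nonnegative, so 0 ≤ ε
  have hnn : ∀ w ∈ {w | ∃ γ : Measure (ℝ × ℝ), γ.map Prod.fst = μ ∧ γ.map Prod.snd = ν ∧
      w = (∫ q, ‖q.1 - q.2‖ ^ (2:ℝ) ∂γ) ^ ((1:ℝ) / 2)}, 0 ≤ w := by
    rintro w ⟨γ, -, -, rfl⟩
    exact Real.rpow_nonneg (integral_nonneg fun q => Real.rpow_nonneg (norm_nonneg _) _) _
  have hε : 0 ≤ ε := le_trans (Real.sInf_nonneg hnn) h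
  refine le_of_forall_pos_le_add fun δ hδ => ?_
  obtain ⟨w, hw, hwlt⟩ := Real.lt_sInf_add_pos hne hδ
  obtain ⟨γ, hγ1, hγ2, rfl⟩ := hw
  have hwε : (∫ q, ‖q.1 - q.2‖ ^ (2:ℝ) ∂γ) ^ ((1:ℝ) / 2) < ε + δ := by
    calc _ < _ + δ := hwlt
      _ ≤ ε + δ := by
        have : sInf {w | ∃ γ : Measure (ℝ × ℝ), γ.map Prod.fst = μ ∧ γ.map Prod.snd = ν ∧
            w = (∫ q, ‖q.1 - q.2‖ ^ (2:ℝ) ∂γ) ^ ((1:ℝ) / 2)} ≤ ε := h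
        linarith
  have hγprob : IsProbabilityMeasure γ := by
    constructor
    have : (γ.map Prod.fst) Set.univ = γ Set.univ := by
      rw [Measure.map_apply measurable_fst MeasurableSet.univ]; rfl
    rw [← this, hγ1, measure_univ]
  have hμ2 : Integrable (fun x => x ^ 2) (γ.map Prod.fst) := hγ1.symm ▸ hμ
  have hν2 : Integrable (fun x => x ^ 2) (γ.map Prod.snd) := hγ2.symm ▸ hν
  have hkey := key_coupling γ hμ2 hν2
  rw [hγ1, hγ2] at hkey
  -- rewrite the integrand
  have hint : ∫ q, ‖q.1 - q.2‖ ^ (2:ℝ) ∂γ = ∫ q, (q.1 - q.2) ^ 2 ∂γ := by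
    refine integral_congr_ae (Filter.Eventually.of_forall fun q => ?_)
    show ‖q.1 - q.2‖ ^ (2:ℝ) = (q.1 - q.2) ^ 2
    rw [show ((2:ℝ)) = ((2:ℕ):ℝ) by norm_num, Real.rpow_natCast]
    simp [sq_abs]
  have hI0 : 0 ≤ ∫ q, (q.1 - q.2) ^ 2 ∂γ := integral_nonneg fun q => sq_nonneg _
  have hwq : (∫ q, ‖q.1 - q.2‖ ^ (2:ℝ) ∂γ) ^ ((1:ℝ) / 2)
      = Real.sqrt (∫ q, (q.1 - q.2) ^ 2 ∂γ) := by
    rw [hint, Real.sqrt_eq_rpow]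
  have habs : |mStd μ - mStd ν| ≤ Real.sqrt (∫ q, (q.1 - q.2) ^ 2 ∂γ) := by
    rw [← Real.sqrt_sq_eq_abs]
    exact Real.sqrt_le_sqrt hkey
  have hle : |mStd μ - mStd ν| ≤ ε + δ := by
    rw [hwq] at hwε
    linarith
  nlinarith [hle, hc1, hε, hδ.le]
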